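/- There exists a constant C' such that for all n ≥ 2 and any C-log-sparse sets S₁, ..., Sₙ of positive integers, every arithmetic progression contained in the sumset S₁ + ⋯ + Sₙ has length at most n^{C'·n}. -/

import Mathlib

/-- A set of positive integers is `C`-log-sparse if every dyadic interval `[x, 2x)`
contains at most `C` of its elements. -/
def LogSparse (C : ℕ) (T : Set ℕ) : Prop :=
  (∀ t ∈ T, 0 < t) ∧ ∀ x : ℕ, 0 < x → (T ∩ Set.Ico x (2 * x)).ncard ≤ C

/-- The sumset `S 0 + S 1 + ⋯ + S (n-1)`. -/
def sumSet {n : ℕ} (S : Fin n → Set ℕ) : Set ℕ :=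
  {s | ∃ x : Fin n → ℕ, (∀ i, x i ∈ S i) ∧ ∑ i, x i = s}

/-- The arithmetic progression `{a, a+d, …, a+(k-1)d}` of length `k`. -/
def AP (a d k : ℕ) : Set ℕ := {m | ∃ i < k, m = a + i * d}

lemma ap_finite (a d k : ℕ) : (AP a d k).Finite := by
  have : AP a d k = (fun i => a + i * d) '' (Set.Iio k) := by
    ext m; simp [AP, Set.mem_image, eq_comm]
  rw [this]
  exact (Set.finite_Iio k).image _

lemma ncard_biUnion_le {ι : Type*} (t : Finset ι) (f : ι → Set ℕ)
    (hf : ∀ i ∈ t, (f i).Finite) :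
    (⋃ i ∈ t, f i).ncard ≤ ∑ i ∈ t, (f i).ncard := by
  classical
  induction t using Finset.induction with
  | empty => simp
  | @insert a s hx ih =>
    rw [Finset.set_biUnion_insert, Finset.sum_insert hx]
    exact le_trans (Set.ncard_union_le _ _)
      (add_le_add le_rfl (ih fun i hi => hf i (Finset.mem_insert_of_mem hi)))

lemma sparse_Ico {C : ℕ} {T : Set ℕ} (hT : LogSparse C T) (u : ℕ) (hu : 1 ≤ u) :
    ∀ m : ℕ, (T ∩ Set.Ico u (u * 2 ^ m)).ncard ≤ C * m := by
  intro m
  induction m with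
  | zero => simp
  | succ m ih =>
    have hsub : T ∩ Set.Ico u (u * 2 ^ (m+1)) ⊆
        (T ∩ Set.Ico u (u * 2 ^ m)) ∪ (T ∩ Set.Ico (u * 2 ^ m) (2 * (u * 2 ^ m))) := by
      intro x ⟨hxT, hx1, hx2⟩
      rcases lt_or_ge x (u * 2 ^ m) with h | h
      · exact Or.inl ⟨hxT, hx1, h⟩
      · refine Or.inr ⟨hxT, h, ?_⟩
        calc x < u * 2 ^ (m+1) := hx2
        _ = 2 * (u * 2 ^ m) := by ring
    have hfin : ((T ∩ Set.Ico u (u * 2 ^ m)) ∪ (T ∩ Set.Ico (u * 2 ^ m) (2 * (u * 2 ^ m)))).Finite := by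
      apply Set.Finite.union <;>
        exact (Set.finite_Ico _ _).subset Set.inter_subset_right
    calc (T ∩ Set.Ico u (u * 2 ^ (m+1))).ncard
        ≤ _ := Set.ncard_le_ncard hsub hfin
      _ ≤ (T ∩ Set.Ico u (u * 2 ^ m)).ncard + (T ∩ Set.Ico (u * 2 ^ m) (2 * (u * 2 ^ m))).ncard :=
          Set.ncard_union_le _ _
      _ ≤ C * m + C := add_le_add ih (hT.2 _ (by positivity))
      _ ≤ C * (m + 1) := by ring_nf; omega

lemma lt_div_add_one_mul (m n : ℕ) (hn : 0 < n) : m < (m / n + 1) * n := by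
  have h1 := Nat.div_add_mod m n
  have h2 := Nat.mod_lt m hn
  have h3 : (m / n + 1) * n = n * (m / n) + n := by ring
  omega

lemma window_count {C : ℕ} {T : Set ℕ} (hT : LogSparse C T) (a n : ℕ) (ha : 1 ≤ a) :
    (T ∩ {x | 1 ≤ x ∧ a ≤ (n+1) * x ∧ x ≤ 2 * a}).ncard ≤ C * (Nat.log 2 (n+1) + 2) := by
  obtain ⟨u, hu1, hageu, hule⟩ :
      ∃ u, 1 ≤ u ∧ a ≤ (n+1) * u ∧ ∀ x, a ≤ (n+1) * x → u ≤ x := by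
    refine ⟨(a + n) / (n + 1), ?_, ?_, ?_⟩
    · exact Nat.one_le_div_iff (by omega) |>.2 (by omega)
    · have h := lt_div_add_one_mul (a + n) (n + 1) (by omega)
      have hx : ((a + n) / (n + 1) + 1) * (n + 1)
          = (n + 1) * ((a + n) / (n + 1)) + (n + 1) := by ring
      omega
    · intro x hx
      have h : (a + n) / (n + 1) < x + 1 := by
        refine (Nat.div_lt_iff_lt_mul (by omega)).2 ?_
        have hx2 : (x + 1) * (n + 1) = (n + 1) * x + (n + 1) := by ring
        omega
      omega
  have hpow : 2 * (n + 1) < 2 ^ (Nat.log 2 (n+1) + 2) := by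
    have h := Nat.lt_pow_succ_log_self (b := 2) (by norm_num) (n+1)
    have h2 : 2 ^ (Nat.log 2 (n+1) + 2) = 2 * 2 ^ (Nat.log 2 (n+1) + 1) := by ring
    omega
  have hsub : T ∩ {x | 1 ≤ x ∧ a ≤ (n+1) * x ∧ x ≤ 2 * a}
      ⊆ T ∩ Set.Ico u (u * 2 ^ (Nat.log 2 (n+1) + 2)) := by
    rintro x ⟨hxT, hx1, hx2, hx3⟩
    refine ⟨hxT, hule x hx2, ?_⟩
    calc x ≤ 2 * a := hx3
    _ ≤ 2 * ((n+1) * u) := by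
        exact Nat.mul_le_mul_left 2 hageu
    _ = (2 * (n+1)) * u := by ring
    _ < 2 ^ (Nat.log 2 (n+1) + 2) * u := Nat.mul_lt_mul_of_lt_of_le hpow le_rfl (by omega)
    _ = u * 2 ^ (Nat.log 2 (n+1) + 2) := Nat.mul_comm _ _
  have hfin : (T ∩ Set.Ico u (u * 2 ^ (Nat.log 2 (n+1) + 2))).Finite :=
    (Set.finite_Ico _ _).subset Set.inter_subset_right
  exact le_trans (Set.ncard_le_ncard hsub hfin) (sparse_Ico hT u hu1 _)

lemma shift (a d k x : ℕ) (hd : 0 < d) :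
    ∃ b, ∀ s, s ∈ AP a d k → x ≤ s → s - x ∈ AP b d k := by
  rcases le_or_gt x a with h | h
  · refine ⟨a - x, ?_⟩
    rintro s ⟨i, hik, rfl⟩ hxs
    exact ⟨i, hik, by omega⟩
  · obtain ⟨i0, hlow, hhigh⟩ : ∃ i0, (i0 - 1) * d < x - a ∧ x - a ≤ i0 * d := by
      refine ⟨(x - a - 1) / d + 1, ?_, ?_⟩
      · have h1 : (x - a - 1) / d * d ≤ x - a - 1 := Nat.div_mul_le_self _ _
        have h2 : ((x - a - 1) / d + 1 - 1) * d = (x - a - 1) / d * d := by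
          congr 1
        rw [h2]; omega
      · have h1 := lt_div_add_one_mul (x - a - 1) d hd
        omega
    refine ⟨i0 * d - (x - a), ?_⟩
    rintro s ⟨i, hik, rfl⟩ hxs
    have hidc : x - a ≤ i * d := by omega
    have hii0 : i0 ≤ i := by
      by_contra hcon
      push_neg at hcon
      have h1 : i ≤ i0 - 1 := by omega
      have h2 : i * d ≤ (i0 - 1) * d := Nat.mul_le_mul_right d h1
      omega
    have hsplit : (i - i0) * d + i0 * d = i * d := by
      rw [← Nat.add_mul]
      congr 1
      omega
    exact ⟨i - i0, by omega, by omega⟩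

lemma top_count {C : ℕ} (n : ℕ) (S : Fin (n+1) → Set ℕ)
    (hS : ∀ i, LogSparse C (S i)) (a d k Q : ℕ) (hd : 0 < d) (ha : 1 ≤ a)
    (hM : ∀ i < k, a + i * d ≤ 2 * a)
    (hrec : ∀ (S' : Fin n → Set ℕ), (∀ i, LogSparse C (S' i)) →
      ∀ b, (sumSet S' ∩ AP b d k).ncard ≤ Q) :
    (sumSet S ∩ AP a d k).ncard ≤ (n+1) * (C * (Nat.log 2 (n+1) + 2) * Q) := by
  classical
  set W : Fin (n+1) → Set ℕ :=
    fun j => S j ∩ {x | 1 ≤ x ∧ a ≤ (n+1) * x ∧ x ≤ 2 * a} with hW_def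
  have hWfin : ∀ j, (W j).Finite := by
    intro j
    refine (Set.finite_Icc 1 (2*a)).subset ?_
    rintro x ⟨_, h1, _, h3⟩
    exact ⟨h1, h3⟩
  choose b hb using fun x => shift a d k x hd
  set piece : Fin (n+1) → ℕ → Set ℕ :=
    fun j x => (fun r => x + r) '' (sumSet (S ∘ Fin.succAbove j) ∩ AP (b x) d k)
    with hpiece_def
  have hpiece_fin : ∀ j x, (piece j x).Finite :=
    fun j x => (((ap_finite _ _ _).subset Set.inter_subset_right).image _)
  have hpiece_card : ∀ j x, (piece j x).ncard ≤ Q := by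
    intro j x
    rw [hpiece_def]
    simp only
    rw [Set.ncard_image_of_injective _ (fun r1 r2 h => by omega)]
    exact hrec _ (fun i => hS _) (b x)
  have cover : sumSet S ∩ AP a d k ⊆ ⋃ j : Fin (n+1), ⋃ x ∈ W j, piece j x := by
    rintro s ⟨⟨y, hy, hsum⟩, hsAP⟩
    obtain ⟨j, -, hmax⟩ := Finset.exists_max_image Finset.univ y Finset.univ_nonempty
    have hxj1 : 1 ≤ y j := (hS j).1 _ (hy j)
    have hsle : s ≤ (n+1) * y j := by
      calc s = ∑ i, y i := hsum.symm
      _ ≤ Finset.univ.card • y j :=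
          Finset.sum_le_card_nsmul _ _ _ (fun i _ => hmax i (Finset.mem_univ i))
      _ = (n+1) * y j := by simp [Finset.card_univ]
    have hyjle : y j ≤ s := by
      rw [← hsum]
      exact Finset.single_le_sum (fun i _ => Nat.zero_le _) (Finset.mem_univ j)
    obtain ⟨i, hik, hsi⟩ := hsAP
    have has : a ≤ s := by omega
    have hs2a : s ≤ 2 * a := by rw [hsi]; exact hM i hik
    have hxmem : y j ∈ W j := ⟨hy j, hxj1, le_trans has hsle, le_trans hyjle hs2a⟩
    have hr : s - y j ∈ sumSet (S ∘ Fin.succAbove j) := by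
      have hsa := Fin.sum_univ_succAbove y j
      exact ⟨fun i => y (j.succAbove i), fun i => hy _, by simp only []; omega⟩
    have hrAP : s - y j ∈ AP (b (y j)) d k := hb (y j) s ⟨i, hik, hsi⟩ hyjle
    refine Set.mem_iUnion.2 ⟨j, ?_⟩
    refine Set.mem_biUnion hxmem ?_
    exact ⟨s - y j, ⟨hr, hrAP⟩, by simp only []; omega⟩
  have hg_fin : ∀ j, (⋃ x ∈ W j, piece j x).Finite :=
    fun j => (hWfin j).biUnion (fun x _ => hpiece_fin j x)
  have hbig_fin : (⋃ j : Fin (n+1), ⋃ x ∈ W j, piece j x).Finite :=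
    Set.finite_iUnion hg_fin
  have hg_card : ∀ j, (⋃ x ∈ W j, piece j x).ncard ≤ C * (Nat.log 2 (n+1) + 2) * Q := by
    intro j
    have heq : (⋃ x ∈ W j, piece j x) = ⋃ x ∈ (hWfin j).toFinset, piece j x := by
      simp [Set.Finite.mem_toFinset]
    rw [heq]
    calc (⋃ x ∈ (hWfin j).toFinset, piece j x).ncard
        ≤ ∑ x ∈ (hWfin j).toFinset, (piece j x).ncard :=
          ncard_biUnion_le _ _ (fun x _ => hpiece_fin j x)
      _ ≤ ∑ _x ∈ (hWfin j).toFinset, Q :=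
          Finset.sum_le_sum (fun x _ => hpiece_card j x)
      _ = (hWfin j).toFinset.card * Q := by rw [Finset.sum_const, smul_eq_mul]
      _ ≤ C * (Nat.log 2 (n+1) + 2) * Q := by
          refine Nat.mul_le_mul_right Q ?_
          rw [← Set.ncard_eq_toFinset_card _ (hWfin j)]
          exact window_count (hS j) a n ha
  calc (sumSet S ∩ AP a d k).ncard
      ≤ (⋃ j : Fin (n+1), ⋃ x ∈ W j, piece j x).ncard :=
        Set.ncard_le_ncard cover hbig_fin
    _ = (⋃ j ∈ (Finset.univ : Finset (Fin (n+1))), ⋃ x ∈ W j, piece j x).ncard := by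
        congr 1
        simp
    _ ≤ ∑ j : Fin (n+1), (⋃ x ∈ W j, piece j x).ncard :=
        ncard_biUnion_le _ _ (fun j _ => hg_fin j)
    _ ≤ ∑ _j : Fin (n+1), C * (Nat.log 2 (n+1) + 2) * Q :=
        Finset.sum_le_sum (fun j _ => hg_card j)
    _ = (n+1) * (C * (Nat.log 2 (n+1) + 2) * Q) := by
        rw [Finset.sum_const, smul_eq_mul, Finset.card_univ, Fintype.card_fin]

/-- weight -/
def Wt (C n : ℕ) : ℕ := n * (C * (Nat.log 2 n + 2))

lemma mul_sub_one_add (w l : ℕ) (hl : 1 ≤ l) : w * (l - 1) + w = w * l := by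
  cases l with
  | zero => omega
  | succ l' => simp [Nat.add_sub_cancel, Nat.mul_succ]

lemma ap_split (a d k : ℕ) :
    AP a d k = AP a d (k / 2) ∪ AP (a + (k / 2) * d) d (k - k / 2) := by
  ext m
  constructor
  · rintro ⟨i, hik, rfl⟩
    rcases lt_or_ge i (k / 2) with h | h
    · exact Or.inl ⟨i, h, rfl⟩
    · refine Or.inr ⟨i - k / 2, by omega, ?_⟩
      have : (i - k / 2) * d + (k / 2) * d = i * d := by
        rw [← Nat.add_mul]; congr 1; omega
      omega
  · rintro (⟨i, hik, rfl⟩ | ⟨i, hik, rfl⟩)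
    · exact ⟨i, by omega, rfl⟩
    · refine ⟨i + k / 2, by omega, ?_⟩
      have : (i + k / 2) * d = i * d + (k / 2) * d := by rw [Nat.add_mul]
      omega

lemma sumset_pos {n : ℕ} (S : Fin (n+1) → Set ℕ) (hS : ∀ i, LogSparse C (S i))
    {s : ℕ} (hs : s ∈ sumSet S) : 1 ≤ s := by
  obtain ⟨y, hy, rfl⟩ := hs
  have h0 : 1 ≤ y 0 := (hS 0).1 _ (hy 0)
  calc 1 ≤ y 0 := h0
  _ ≤ ∑ i, y i := Finset.single_le_sum (fun i _ => Nat.zero_le _) (Finset.mem_univ 0)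

lemma key (C : ℕ) (hC : 0 < C) :
    ∀ n (S : Fin n → Set ℕ), (∀ i, LogSparse C (S i)) → ∀ k a d, 0 < d →
      (sumSet S ∩ AP a d k).ncard ≤ (Wt C n * (Nat.log 2 k + 2)) ^ n := by
  intro n
  induction n with
  | zero =>
    intro S hS k a d hd
    have hsub : sumSet S ∩ AP a d k ⊆ {0} := by
      rintro s ⟨⟨y, hy, rfl⟩, -⟩
      simp
    calc (sumSet S ∩ AP a d k).ncard ≤ ({0} : Set ℕ).ncard :=
        Set.ncard_le_ncard hsub (Set.finite_singleton 0)
    _ = 1 := Set.ncard_singleton 0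
    _ = _ := (pow_zero _).symm
  | succ n ih =>
    intro S hS k
    induction k using Nat.strong_induction_on with
    | _ k ihk =>
      intro a d hd
      rcases Nat.eq_zero_or_pos k with rfl | hk
      · have : AP a d 0 = ∅ := by
          ext m; simp [AP]
        simp [this]
      -- notation
      have hWmono : Wt C (n+1) ≥ Wt C n := by
        unfold Wt
        have h := Nat.log_mono_right (b := 2) (show n ≤ n + 1 by omega)
        exact Nat.mul_le_mul (Nat.le_succ n) (Nat.mul_le_mul le_rfl (by omega))
      have hW1 : 1 ≤ Wt C (n+1) := by
        unfold Wt
        have : 1 ≤ Nat.log 2 (n+1) + 2 := by omega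
        calc 1 = 1 * (1 * 1) := by norm_num
        _ ≤ (n+1) * (C * (Nat.log 2 (n+1) + 2)) :=
          Nat.mul_le_mul (by omega) (Nat.mul_le_mul hC (by omega))
      set L : ℕ := Nat.log 2 k + 2 with hL_def
      have hL3 : 2 ≤ L := by omega
      -- split
      rw [ap_split a d k, Set.inter_union_distrib_left]
      have hfin1 : (sumSet S ∩ AP a d (k / 2)).Finite :=
        (ap_finite _ _ _).subset Set.inter_subset_right
      have hfin2 : (sumSet S ∩ AP (a + (k/2) * d) d (k - k/2)).Finite :=
        (ap_finite _ _ _).subset Set.inter_subset_right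
      have term1 : (sumSet S ∩ AP a d (k / 2)).ncard ≤ (Wt C (n+1) * (L - 1)) ^ (n+1) := by
        rcases Nat.lt_or_ge k 2 with h2 | h2
        · have hk1 : k = 1 := by omega
          subst hk1
          have : AP a d (1/2) = ∅ := by ext m; simp [AP]
          simp [this]
        · have hlog : Nat.log 2 (k / 2) = Nat.log 2 k - 1 := Nat.log_div_base 2 k
          have hlogk : 1 ≤ Nat.log 2 k := by
            have h := Nat.log_mono_right (b := 2) h2
            have h22 : Nat.log 2 2 = 1 := by
              rw [Nat.log_eq_one_iff] <;> norm_num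
            omega
          have := ihk (k / 2) (by omega) a d hd
          calc (sumSet S ∩ AP a d (k / 2)).ncard
              ≤ (Wt C (n+1) * (Nat.log 2 (k/2) + 2)) ^ (n+1) := this
            _ = (Wt C (n+1) * (L - 1)) ^ (n+1) := by
                congr 2
                omega
      have term2 : (sumSet S ∩ AP (a + (k/2) * d) d (k - k/2)).ncard
          ≤ Wt C (n+1) * (Wt C (n+1) * L) ^ n := by
        rcases Nat.eq_zero_or_pos (a + (k/2) * d) with h0 | hpos
        · -- a = 0 and k/2 = 0, so k = 1: AP 0 d 1 = {0}, no sums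
          have ha0 : a = 0 := by omega
          have hk2 : k / 2 = 0 := by
            rcases Nat.eq_zero_or_pos (k / 2) with h | h
            · exact h
            · exfalso; have : 1 ≤ (k/2) * d := Nat.mul_le_mul h hd; omega
          have hsub : sumSet S ∩ AP (a + (k/2) * d) d (k - k/2) ⊆ ∅ := by
            rintro s ⟨hs, ⟨i, hik, rfl⟩⟩
            have h1 := sumset_pos S hS hs
            have hi0 : i = 0 := by omega
            subst hi0
            have hz : (0:ℕ) * d = 0 := Nat.zero_mul d
            omega
          calc (sumSet S ∩ AP (a + (k/2)*d) d (k - k/2)).ncard ≤ (∅ : Set ℕ).ncard :=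
              Set.ncard_le_ncard hsub Set.finite_empty
          _ = 0 := Set.ncard_empty _
          _ ≤ _ := Nat.zero_le _
        · -- main: apply top_count
          have hM : ∀ i < k - k/2, (a + (k/2) * d) + i * d ≤ 2 * (a + (k/2) * d) := by
            intro i hi
            have hi' : i ≤ k - k/2 - 1 := by omega
            have h1 : i * d ≤ (k - k/2 - 1) * d := Nat.mul_le_mul_right d hi'
            have h2 : (k - k/2 - 1) * d ≤ (k/2) * d := Nat.mul_le_mul_right d (by omega)
            omega
          have hrec : ∀ (S' : Fin n → Set ℕ), (∀ i, LogSparse C (S' i)) →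
              ∀ b, (sumSet S' ∩ AP b d (k - k/2)).ncard ≤ (Wt C (n+1) * L) ^ n := by
            intro S' hS' b
            have h1 := ih S' hS' (k - k/2) b d hd
            have hlogle : Nat.log 2 (k - k/2) + 2 ≤ L := by
              have := Nat.log_mono_right (b := 2) (Nat.sub_le k (k/2))
              omega
            calc (sumSet S' ∩ AP b d (k - k/2)).ncard
                ≤ (Wt C n * (Nat.log 2 (k - k/2) + 2)) ^ n := h1
              _ ≤ (Wt C (n+1) * L) ^ n :=
                  Nat.pow_le_pow_left (Nat.mul_le_mul hWmono hlogle) n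
          have := top_count n S hS (a + (k/2) * d) d (k - k/2) ((Wt C (n+1) * L) ^ n)
            hd hpos hM hrec
          calc (sumSet S ∩ AP (a + (k/2)*d) d (k - k/2)).ncard
              ≤ (n+1) * (C * (Nat.log 2 (n+1) + 2) * (Wt C (n+1) * L) ^ n) := this
            _ = Wt C (n+1) * (Wt C (n+1) * L) ^ n := by
                unfold Wt; ring
      calc ((sumSet S ∩ AP a d (k/2)) ∪ (sumSet S ∩ AP (a + (k/2)*d) d (k - k/2))).ncard
          ≤ _ + _ := Set.ncard_union_le _ _
        _ ≤ (Wt C (n+1) * (L - 1)) ^ (n+1) + Wt C (n+1) * (Wt C (n+1) * L) ^ n :=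
            add_le_add term1 term2
        _ ≤ (Wt C (n+1) * L) ^ (n+1) := by
            have hXY : Wt C (n+1) * (L - 1) ≤ Wt C (n+1) * L :=
              Nat.mul_le_mul le_rfl (by omega)
            have h1 : (Wt C (n+1) * (L - 1)) ^ (n+1)
                ≤ (Wt C (n+1) * (L - 1)) * (Wt C (n+1) * L) ^ n := by
              rw [pow_succ]
              rw [Nat.mul_comm]
              exact Nat.mul_le_mul le_rfl (Nat.pow_le_pow_left hXY n)
            have h2 : Wt C (n+1) * (L - 1) + Wt C (n+1) = Wt C (n+1) * L :=
              mul_sub_one_add _ _ (by omega)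
            calc (Wt C (n+1) * (L-1)) ^ (n+1) + Wt C (n+1) * (Wt C (n+1) * L) ^ n
                ≤ (Wt C (n+1) * (L-1)) * (Wt C (n+1) * L) ^ n
                  + Wt C (n+1) * (Wt C (n+1) * L) ^ n := add_le_add h1 le_rfl
              _ = (Wt C (n+1) * (L-1) + Wt C (n+1)) * (Wt C (n+1) * L) ^ n := by ring
              _ = (Wt C (n+1) * L) * (Wt C (n+1) * L) ^ n := by rw [h2]
              _ = (Wt C (n+1) * L) ^ (n+1) := (pow_succ' _ _).symm

lemma pow_log_bound (m j : ℕ) (hj : 0 < j) : (m + 2) ^ j ≤ (4 * j) ^ j * 2 ^ m := by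
  set q := m / (2 * j) with hq_def
  have hq2 : q + 2 ≤ 2 ^ (q + 1) := by
    have := Nat.lt_two_pow_self (n := q + 1)
    omega
  have hm2 : m + 2 ≤ (2 * j) * 2 ^ (q + 1) := by
    have h1 : m < (q + 1) * (2 * j) := by
      have h2 := Nat.div_add_mod m (2 * j)
      have h3 := Nat.mod_lt m (show 0 < 2 * j by omega)
      have h4 : (q + 1) * (2 * j) = (2 * j) * q + 2 * j := by ring
      rw [hq_def] at *
      omega
    calc m + 2 ≤ (q + 1) * (2 * j) + 2 := by omega
    _ ≤ (q + 2) * (2 * j) := by ring_nf; omega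
    _ ≤ 2 ^ (q + 1) * (2 * j) := Nat.mul_le_mul_right _ hq2
    _ = (2 * j) * 2 ^ (q + 1) := Nat.mul_comm _ _
  have hqj : q * j * 2 ≤ m := by
    have h1 : q * (2 * j) ≤ m := by
      rw [hq_def]; exact Nat.div_mul_le_self m (2 * j)
    have h2 : q * (2 * j) = q * j * 2 := by ring
    omega
  calc (m + 2) ^ j ≤ ((2 * j) * 2 ^ (q + 1)) ^ j := Nat.pow_le_pow_left hm2 j
  _ = (4 * j) ^ j * (2 ^ (q * j)) := by
      rw [show (2 * j) * 2 ^ (q + 1) = 4 * j * 2 ^ q from by rw [pow_succ]; ring,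
        Nat.mul_pow, ← Nat.pow_mul]
  _ ≤ (4 * j) ^ j * 2 ^ m := by
      refine Nat.mul_le_mul_left _ (Nat.pow_le_pow_right (by omega) (by omega))

lemma ap_ncard (a d k : ℕ) (hd : 0 < d) : (AP a d k).ncard = k := by
  have h : AP a d k = ↑((Finset.range k).image (fun i => a + i * d)) := by
    ext m
    constructor
    · rintro ⟨i, hik, rfl⟩
      exact Finset.mem_coe.2 (Finset.mem_image.2 ⟨i, Finset.mem_range.2 hik, rfl⟩)
    · intro hm
      obtain ⟨i, hi, rfl⟩ := Finset.mem_image.1 (Finset.mem_coe.1 hm)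
      exact ⟨i, Finset.mem_range.1 hi, rfl⟩
  rw [h, Set.ncard_coe_finset]
  rw [Finset.card_image_of_injective _ (fun i1 i2 hh => by
    exact Nat.eq_of_mul_eq_mul_right hd (Nat.add_left_cancel hh))]
  exact Finset.card_range k

theorem ap_in_sumset_upper (C : ℕ) (hC : 0 < C) :
    ∃ C' : ℝ, ∀ n : ℕ, 2 ≤ n → ∀ S : Fin n → Set ℕ, (∀ i, LogSparse C (S i)) →
      ∀ a d k : ℕ, 1 ≤ d → AP a d k ⊆ sumSet S →
        (k : ℝ) ≤ (n : ℝ) ^ (C' * (n : ℝ)) := by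
  refine ⟨(2 * C + 14 : ℝ), ?_⟩
  intro n hn S hS a d k hd hsub
  have hnR : (0:ℝ) < (n:ℝ) := by positivity
  rcases Nat.eq_zero_or_pos k with rfl | hk
  · simpa using Real.rpow_nonneg (le_of_lt hnR) _
  -- Step 1 : k ≤ (Wt C n * (log k + 2))^n
  have hkey := key C hC n S hS k a d hd
  have hint : sumSet S ∩ AP a d k = AP a d k := Set.inter_eq_right.2 hsub
  rw [hint, ap_ncard a d k hd] at hkey
  -- Step 2 : self-improvement: k ≤ (8 * n * Wt C n)^(2*n)
  have hn1 : 0 < n := by omega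
  have hstep2 : k ≤ (8 * n * Wt C n) ^ (2 * n) := by
    have hlog : 2 ^ Nat.log 2 k ≤ k := Nat.pow_log_le_self 2 (by omega)
    have h1 : k ^ 2 ≤ (Wt C n * (Nat.log 2 k + 2)) ^ (2 * n) := by
      calc k ^ 2 ≤ ((Wt C n * (Nat.log 2 k + 2)) ^ n) ^ 2 :=
          Nat.pow_le_pow_left hkey 2
      _ = (Wt C n * (Nat.log 2 k + 2)) ^ (2 * n) := by
          rw [← Nat.pow_mul]; ring_nf
    have h2 : (Nat.log 2 k + 2) ^ (2 * n) ≤ (8 * n) ^ (2 * n) * k := by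
      calc (Nat.log 2 k + 2) ^ (2 * n) ≤ (4 * (2 * n)) ^ (2 * n) * 2 ^ (Nat.log 2 k) :=
          pow_log_bound _ _ (by omega)
      _ ≤ (8 * n) ^ (2 * n) * k := by
          refine Nat.mul_le_mul ?_ hlog
          refine Nat.pow_le_pow_left (by omega) _
    have h3 : k ^ 2 ≤ (8 * n * Wt C n) ^ (2 * n) * k := by
      calc k ^ 2 ≤ (Wt C n * (Nat.log 2 k + 2)) ^ (2 * n) := h1
      _ = (Wt C n) ^ (2 * n) * (Nat.log 2 k + 2) ^ (2 * n) := Nat.mul_pow _ _ _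
      _ ≤ (Wt C n) ^ (2 * n) * ((8 * n) ^ (2 * n) * k) :=
          Nat.mul_le_mul_left _ h2
      _ = ((8 * n) ^ (2 * n) * (Wt C n) ^ (2 * n)) * k := by ring
      _ = (8 * n * Wt C n) ^ (2 * n) * k := by rw [← Nat.mul_pow]
    have h4 : k * k ≤ (8 * n * Wt C n) ^ (2 * n) * k := by
      calc k * k = k ^ 2 := (sq k).symm
      _ ≤ _ := h3
    exact Nat.le_of_mul_le_mul_right h4 hk
  -- Step 3 : 8 n Wt ≤ n ^ (C + 7)
  have hstep3 : 8 * n * Wt C n ≤ n ^ (C + 7) := by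
    have hlogn : Nat.log 2 n + 2 ≤ 2 * n := by
      have := Nat.log_lt_self 2 (show n ≠ 0 by omega)
      omega
    have hCn : C ≤ n ^ C := by
      calc C ≤ 2 ^ C := le_of_lt (Nat.lt_two_pow_self (n := C))
      _ ≤ n ^ C := Nat.pow_le_pow_left hn C
    calc 8 * n * Wt C n = 8 * n * (n * (C * (Nat.log 2 n + 2))) := rfl
    _ ≤ 8 * n * (n * (C * (2 * n))) := by
        refine Nat.mul_le_mul_left _ (Nat.mul_le_mul_left _ (Nat.mul_le_mul_left _ hlogn))
    _ = 16 * C * n ^ 3 := by ring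
    _ ≤ n ^ 4 * n ^ C * n ^ 3 := by
        refine Nat.mul_le_mul (Nat.mul_le_mul ?_ hCn) le_rfl
        calc 16 = 2 ^ 4 := by norm_num
        _ ≤ n ^ 4 := Nat.pow_le_pow_left hn 4
    _ = n ^ (C + 7) := by rw [← Nat.pow_add, ← Nat.pow_add]; congr 1; omega
  -- combine
  have hfinal : k ≤ n ^ ((2 * C + 14) * n) := by
    calc k ≤ (8 * n * Wt C n) ^ (2 * n) := hstep2
    _ ≤ (n ^ (C + 7)) ^ (2 * n) := Nat.pow_le_pow_left hstep3 _
    _ = n ^ ((2 * C + 14) * n) := by rw [← Nat.pow_mul]; ring_nf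
  have hcast : ((2 : ℝ) * C + 14) * (n : ℝ) = (((2 * C + 14) * n : ℕ) : ℝ) := by
    push_cast; ring
  calc (k : ℝ) ≤ ((n ^ ((2 * C + 14) * n) : ℕ) : ℝ) := by exact_mod_cast hfinal
  _ = (n : ℝ) ^ (((2 * C + 14) * n : ℕ)) := by push_cast; ring
  _ = (n : ℝ) ^ ((2 * (C:ℝ) + 14) * (n : ℝ)) := by
      rw [← Real.rpow_natCast ((n:ℝ)) _, hcast]
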